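/- The exponential mechanism with utility function u and privacy parameter ε, which outputs v with probability proportional to exp(ε·u(D,v)/(2Δu)), satisfies ε-differential privacy, where Δu = max over neighboring D, D' and all v of |u(D,v) - u(D',v)|. -/
import Mathlib


theorem exponential_mechanism_dp {𝒟 𝒱 : Type*} [Fintype 𝒱]
    (adj : 𝒟 → 𝒟 → Prop) (u : 𝒟 → 𝒱 → ℝ) (ε Δu : ℝ)
    (hΔpos : 0 < Δu) (hε : 0 ≤ ε)
    (hsens : ∀ D D', adj D D' → ∀ v, |u D v - u D' v| ≤ Δu)
    (D D' : 𝒟) (hadj : adj D D') (v : 𝒱) :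
    Real.exp (ε * u D v / (2 * Δu)) / ∑ w, Real.exp (ε * u D w / (2 * Δu)) ≤
      Real.exp ε *
        (Real.exp (ε * u D' v / (2 * Δu)) / ∑ w, Real.exp (ε * u D' w / (2 * Δu))) := by
  classical
  rcases isEmpty_or_nonempty 𝒱 with hE | hNE
  · simp
  set S := ∑ w, Real.exp (ε * u D w / (2 * Δu)) with hS
  set S' := ∑ w, Real.exp (ε * u D' w / (2 * Δu)) with hS'
  have hSpos : 0 < S := Finset.sum_pos (fun w _ => Real.exp_pos _) Finset.univ_nonempty
  have hS'pos : 0 < S' := Finset.sum_pos (fun w _ => Real.exp_pos _) Finset.univ_nonempty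
  have key : ∀ x y : ℝ, x - y ≤ Δu →
      Real.exp (ε * x / (2 * Δu)) ≤ Real.exp (ε / 2) * Real.exp (ε * y / (2 * Δu)) := by
    intro x y h1
    rw [← Real.exp_add, Real.exp_le_exp]
    have h2 : ε * x ≤ ε * y + ε * Δu := by nlinarith
    have h3 : ε * x / (2 * Δu) ≤ (ε * y + ε * Δu) / (2 * Δu) :=
      (div_le_div_iff_of_pos_right (by linarith)).mpr h2
    have heq : (ε * y + ε * Δu) / (2 * Δu) = ε / 2 + ε * y / (2 * Δu) := by
      field_simp; ring
    linarith [heq ▸ h3]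
  have hnum := key (u D v) (u D' v) (abs_le.mp (hsens D D' hadj v)).2
  have hden : S' ≤ Real.exp (ε / 2) * S := by
    rw [hS, hS', Finset.mul_sum]
    exact Finset.sum_le_sum fun w _ =>
      key (u D' w) (u D w) (by linarith [(abs_le.mp (hsens D D' hadj w)).1])
  rw [mul_div_assoc', div_le_div_iff₀ hSpos hS'pos]
  calc Real.exp (ε * u D v / (2 * Δu)) * S'
      ≤ (Real.exp (ε / 2) * Real.exp (ε * u D' v / (2 * Δu))) * (Real.exp (ε / 2) * S) :=
        mul_le_mul hnum hden (le_of_lt hS'pos) (by positivity)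
    _ = Real.exp ε * Real.exp (ε * u D' v / (2 * Δu)) * S := by
        rw [mul_mul_mul_comm, ← Real.exp_add, add_halves, ← mul_assoc]
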